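/- Let F be a field, let M be an n×m matrix over F, and let R be the rook matrix of M. Then for all unitriangular matrices A ∈ T_n(F) and B ∈ T_m(F), the matrix A·M·B belongs to the set Ll(R); that is, (A·M·B)_{i,j} = R_{i,j} for every position (i,j) that is not covered with respect to R. -/

import Mathlib

/-- A square matrix is unitriangular if it is upper triangular with 1's on the diagonal. -/
def Matrix.IsUnitriangular {n : ℕ} {R : Type*} [Zero R] [One R]
    (A : Matrix (Fin n) (Fin n) R) : Prop :=
  (∀ i, A i i = 1) ∧ ∀ i j : Fin n, j < i → A i j = 0

/-- A matrix is a rook matrix if every row and every column contains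
at most one nonzero entry. -/
def Matrix.IsRook {n m : ℕ} {F : Type*} [Zero F]
    (R : Matrix (Fin n) (Fin m) F) : Prop :=
  (∀ i j j', R i j ≠ 0 → R i j' ≠ 0 → j = j') ∧
  (∀ i i' j, R i j ≠ 0 → R i' j ≠ 0 → i = i')

/-- A position `(i,j)` is covered w.r.t. a (rook) matrix `R` if there is a nonzero
entry of `R` at a position `(i',j')` with (i < i' and j ≥ j') or (i ≤ i' and j > j'). -/
def Matrix.Covered {n m : ℕ} {F : Type*} [Zero F]
    (R : Matrix (Fin n) (Fin m) F) (i : Fin n) (j : Fin m) : Prop :=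
  ∃ i' j', R i' j' ≠ 0 ∧ ((i < i' ∧ j' ≤ j) ∨ (i ≤ i' ∧ j' < j))

section Aux

variable {F : Type*} [Field F] {n m : ℕ}

lemma unitri_mul {A B : Matrix (Fin n) (Fin n) F}
    (hA : A.IsUnitriangular) (hB : B.IsUnitriangular) : (A * B).IsUnitriangular := by
  constructor
  · intro i
    rw [Matrix.mul_apply, Finset.sum_eq_single i]
    · simp [hA.1, hB.1]
    · intro k _ hk
      rcases lt_or_gt_of_ne hk with h | h
      · simp [hA.2 i k h]
      · simp [hB.2 k i h]
    · simp
  · intro i j hji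
    rw [Matrix.mul_apply]
    apply Finset.sum_eq_zero
    intro k _
    rcases lt_or_ge k i with h | h
    · simp [hA.2 i k h]
    · simp [hB.2 k j (lt_of_lt_of_le hji h)]

lemma strict_pow_entry {N : Matrix (Fin n) (Fin n) F}
    (hN : ∀ i j : Fin n, (j : ℕ) ≤ (i : ℕ) → N i j = 0) :
    ∀ (k : ℕ) (i j : Fin n), (j : ℕ) < (i : ℕ) + k → (N ^ k) i j = 0 := by
  intro k
  induction k with
  | zero =>
    intro i j h
    have hij : i ≠ j := by
      intro e; subst e; omega
    simp [Matrix.one_apply, hij]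
  | succ k ih =>
    intro i j h
    rw [pow_succ, Matrix.mul_apply]
    apply Finset.sum_eq_zero
    intro l _
    rcases lt_or_ge (l : ℕ) ((i : ℕ) + k) with hl | hl
    · simp [ih i l hl]
    · have : (j : ℕ) ≤ (l : ℕ) := by omega
      simp [hN l j this]

lemma exists_unitri_inv {A : Matrix (Fin n) (Fin n) F} (hA : A.IsUnitriangular) :
    ∃ C : Matrix (Fin n) (Fin n) F, C.IsUnitriangular ∧ C * A = 1 ∧ A * C = 1 := by
  set N : Matrix (Fin n) (Fin n) F := A - 1 with hNdef
  have hN : ∀ i j : Fin n, (j : ℕ) ≤ (i : ℕ) → N i j = 0 := by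
    intro i j h
    rcases eq_or_lt_of_le h with h | h
    · have : j = i := Fin.ext h
      subst this
      simp [hNdef, hA.1, Matrix.one_apply]
    · have hlt : j < i := h
      have hij : i ≠ j := by
        intro e; subst e
        exact absurd h (lt_irrefl _)
      simp [hNdef, hA.2 i j hlt, Matrix.one_apply, hij]
  have hN' : ∀ i j : Fin n, (j : ℕ) ≤ (i : ℕ) → (-N) i j = 0 := by
    intro i j h
    simp [hN i j h]
  have hpow : (-N) ^ n = 0 := by
    ext i j
    have := strict_pow_entry hN' n i j (by omega)
    simpa using this
  have hA' : A = N + 1 := by simp [hNdef]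
  refine ⟨∑ k ∈ Finset.range n, (-N) ^ k, ?_, ?_, ?_⟩
  · constructor
    · intro i
      have hn : 0 < n := i.pos
      rw [Matrix.sum_apply]
      rw [Finset.sum_eq_single 0]
      · simp [Matrix.one_apply]
      · intro k _ hk
        exact strict_pow_entry hN' k i i (by omega)
      · intro h; exact absurd (Finset.mem_range.mpr hn) h
    · intro i j hji
      rw [Matrix.sum_apply]
      apply Finset.sum_eq_zero
      intro k _
      apply strict_pow_entry hN' k i j
      have : (j : ℕ) < (i : ℕ) := hji
      omega
  · have h2 : (∑ k ∈ Finset.range n, (-N) ^ k) * (-N - 1) = (0 : Matrix (Fin n) (Fin n) F) - 1 := by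
      rw [← hpow]; exact geom_sum_mul (-N) n
    have h3 : (∑ k ∈ Finset.range n, (-N) ^ k) * (N + 1)
        = -((∑ k ∈ Finset.range n, (-N) ^ k) * (-N - 1)) := by
      noncomm_ring
    rw [hA', h3, h2]
    simp
  · have h2 : (-N - 1) * (∑ k ∈ Finset.range n, (-N) ^ k) = (0 : Matrix (Fin n) (Fin n) F) - 1 := by
      rw [← hpow]; exact mul_geom_sum (-N) n
    have h3 : (N + 1) * (∑ k ∈ Finset.range n, (-N) ^ k)
        = -((-N - 1) * (∑ k ∈ Finset.range n, (-N) ^ k)) := by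
      noncomm_ring
    rw [hA', h3, h2]
    simp

lemma key_cell {U : Matrix (Fin n) (Fin n) F} {V : Matrix (Fin m) (Fin m) F}
    {R : Matrix (Fin n) (Fin m) F}
    (hU : U.IsUnitriangular) (hV : V.IsUnitriangular)
    (i : Fin n) (j : Fin m) (h : ¬ R.Covered i j) :
    (U * R * V) i j = R i j := by
  have h' : ∀ i' j', R i' j' ≠ 0 → ¬((i < i' ∧ j' ≤ j) ∨ (i ≤ i' ∧ j' < j)) :=
    fun i' j' hne hc => h ⟨i', j', hne, hc⟩
  rw [Matrix.mul_apply, Finset.sum_eq_single j]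
  · rw [Matrix.mul_apply, Finset.sum_eq_single i]
    · simp [hU.1, hV.1]
    · intro k _ hk
      by_cases hUk : U i k = 0
      · simp [hUk]
      have hik : i < k := by
        rcases lt_or_ge k i with h1 | h1
        · exact absurd (hU.2 i k h1) hUk
        · exact lt_of_le_of_ne h1 (Ne.symm hk)
      by_cases hR : R k j = 0
      · simp [hR]
      · exact absurd (Or.inl ⟨hik, le_refl j⟩) (h' k j hR)
    · simp
  · intro l _ hl
    by_cases hVl : V l j = 0
    · simp [hVl]
    have hlj : l < j := by
      rcases lt_or_ge j l with h1 | h1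
      · exact absurd (hV.2 l j h1) hVl
      · exact lt_of_le_of_ne h1 hl
    rw [Matrix.mul_apply, Finset.sum_mul]
    apply Finset.sum_eq_zero
    intro k _
    by_cases hUk : U i k = 0
    · simp [hUk]
    have hik : i ≤ k := by
      rcases lt_or_ge k i with h1 | h1
      · exact absurd (hU.2 i k h1) hUk
      · exact h1
    by_cases hR : R k l = 0
    · simp [hR]
    · exact absurd (Or.inr ⟨hik, hlj⟩) (h' k l hR)
  · simp

end Aux

/-- If `R` is the rook matrix of `M` (the unique rook matrix in the orbit of `M` under
left/right multiplication by unitriangular matrices), then every matrix `A * M * B`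
with `A`, `B` unitriangular agrees with `R` at every non-covered position. -/
theorem orbit_mem_bruhat_cell {F : Type*} [Field F] {n m : ℕ}
    (M R : Matrix (Fin n) (Fin m) F) (hRrook : R.IsRook)
    (hRorb : ∃ (A₀ : Matrix (Fin n) (Fin n) F) (B₀ : Matrix (Fin m) (Fin m) F),
      A₀.IsUnitriangular ∧ B₀.IsUnitriangular ∧ A₀ * M * B₀ = R) :
    ∀ (A : Matrix (Fin n) (Fin n) F) (B : Matrix (Fin m) (Fin m) F),
      A.IsUnitriangular → B.IsUnitriangular →
      ∀ i j, ¬ R.Covered i j → (A * M * B) i j = R i j := by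
  obtain ⟨A₀, B₀, hA₀, hB₀, hEq⟩ := hRorb
  intro A B hA hB i j hnc
  obtain ⟨C, hC, hCA, _⟩ := exists_unitri_inv hA₀
  obtain ⟨D, hD, _, hBD⟩ := exists_unitri_inv hB₀
  have key2 : (A * C) * R * (D * B) = A * M * B := by
    rw [← hEq]
    have : A * C * (A₀ * M * B₀) * (D * B) = (A * (C * A₀)) * M * ((B₀ * D) * B) := by
      simp only [Matrix.mul_assoc]
    rw [this, hCA, hBD, Matrix.mul_one, Matrix.one_mul]
  rw [← key2]
  exact key_cell (unitri_mul hA hC) (unitri_mul hD hB) i j hnc
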